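/- If G₁ and G₂ are isomorphic simple graphs on a finite vertex type V (i.e., Nonempty (G₁ ≃g G₂)), then the distribution of a uniformly random vertex-relabeling of G₁ equals the distribution of a uniformly random vertex-relabeling of G₂: PMF.map (fun π => SimpleGraph.map π.toEmbedding G₁) (PMF.uniformOfFintype (Equiv.Perm V)) = PMF.map (fun π => SimpleGraph.map π.toEmbedding G₂) (PMF.uniformOfFintype (Equiv.Perm V)). -/

import Mathlib

lemma map_iso_eq {V : Type*} {G₁ G₂ : SimpleGraph V} (e : G₁ ≃g G₂) :
    SimpleGraph.map e.toEquiv.toEmbedding G₁ = G₂ := by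
  ext a b
  rw [SimpleGraph.map_adj]
  simp only [SimpleGraph.map_adj, Equiv.coe_toEmbedding]
  constructor
  · rintro ⟨u, v, huv, rfl, rfl⟩
    exact e.map_adj_iff.mpr huv
  · intro hab
    exact ⟨e.symm a, e.symm b, by simpa using e.symm.map_adj_iff.mpr hab, by simp, by simp⟩

lemma pmf_map_equiv_uniform {α : Type*} [Fintype α] [Nonempty α] (e : α ≃ α) :
    PMF.map e (PMF.uniformOfFintype α) = PMF.uniformOfFintype α := by
  ext b
  rw [PMF.map_apply]
  rw [tsum_eq_single (e.symm b) (by intro a ha; simp [Equiv.eq_symm_apply] at *; tauto)]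
  simp

theorem iso_graphs_random_relabeling_eq {V : Type*} [Fintype V] [DecidableEq V]
    (G₁ G₂ : SimpleGraph V) (h : Nonempty (G₁ ≃g G₂)) :
    PMF.map (fun π : Equiv.Perm V => SimpleGraph.map π.toEmbedding G₁)
        (PMF.uniformOfFintype (Equiv.Perm V)) =
      PMF.map (fun π : Equiv.Perm V => SimpleGraph.map π.toEmbedding G₂)
        (PMF.uniformOfFintype (Equiv.Perm V)) := by
  obtain ⟨e⟩ := h
  have key : (fun π : Equiv.Perm V => SimpleGraph.map π.toEmbedding G₂)
      = (fun π : Equiv.Perm V => SimpleGraph.map π.toEmbedding G₁)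
        ∘ (Equiv.mulRight (e.toEquiv : Equiv.Perm V)) := by
    funext π
    simp only [Function.comp_apply, Equiv.coe_mulRight]
    conv_lhs => rw [← map_iso_eq e]
    rw [SimpleGraph.map_map]
    rfl
  rw [key, ← PMF.map_comp, pmf_map_equiv_uniform]
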